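/- arXiv:2009.02251 — 2 statements merged into one kernel-verified Lean document; each statement's English description precedes it below -/
import Mathlib

section
/- (Eckart–Young, Frobenius norm) For any m×n real matrix A and any m×n matrix M of rank at most k, ‖A − A_k‖_F ≤ ‖A − M‖_F, where A_k is the rank-k truncated SVD of A. -/
open Matrix

noncomputable def frobSq {α β : Type*} [Fintype α] [Fintype β]
    (A : Matrix α β ℝ) : ℝ := ∑ i, ∑ j, (A i j) ^ 2

lemma frobSq_nonneg {α β : Type*} [Fintype α] [Fintype β] (X : Matrix α β ℝ) :
    0 ≤ frobSq X :=
  Finset.sum_nonneg fun _ _ => Finset.sum_nonneg fun _ _ => sq_nonneg _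

lemma frobSq_eq_trace {α β : Type*} [Fintype α] [Fintype β] (X : Matrix α β ℝ) :
    frobSq X = (X * Xᵀ).trace := by
  simp [frobSq, Matrix.trace, Matrix.mul_apply, sq]

lemma frobSq_conj {m n : ℕ} (U : Matrix (Fin m) (Fin m) ℝ) (V : Matrix (Fin n) (Fin n) ℝ)
    (hU : Uᵀ * U = 1) (hV : Vᵀ * V = 1) (X : Matrix (Fin m) (Fin n) ℝ) :
    frobSq (U * X * Vᵀ) = frobSq X := by
  rw [frobSq_eq_trace, frobSq_eq_trace]
  have hcan : ∀ (y : Matrix (Fin n) (Fin m) ℝ), Vᵀ * (V * y) = y := by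
    intro y; rw [← Matrix.mul_assoc, hV, Matrix.one_mul]
  have h1 : (U * X * Vᵀ) * (U * X * Vᵀ)ᵀ = U * (X * Xᵀ) * Uᵀ := by
    rw [Matrix.transpose_mul, Matrix.transpose_mul, Matrix.transpose_transpose]
    simp only [Matrix.mul_assoc, hcan]
  rw [h1, Matrix.trace_mul_comm, ← Matrix.mul_assoc, hU, Matrix.one_mul]

lemma frobSq_proj_split {m n : ℕ} (X : Matrix (Fin m) (Fin n) ℝ)
    (P : Matrix (Fin n) (Fin n) ℝ) (hPt : Pᵀ = P) (hPP : P * P = P) :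
    frobSq X = frobSq (X * P) + frobSq (X * (1 - P)) := by
  rw [frobSq_eq_trace, frobSq_eq_trace, frobSq_eq_trace]
  have h1 : (X * P) * (X * P)ᵀ = X * P * Xᵀ := by
    rw [Matrix.transpose_mul, hPt, ← Matrix.mul_assoc, Matrix.mul_assoc X P P, hPP]
  have h2 : (X * (1 - P)) * (X * (1 - P))ᵀ = X * Xᵀ - X * P * Xᵀ := by
    have hQ : (1 - P) * (1 - P)ᵀ = 1 - P := by
      rw [Matrix.transpose_sub, Matrix.transpose_one, hPt]
      rw [Matrix.sub_mul, Matrix.mul_sub, Matrix.mul_sub, hPP]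
      simp
    rw [Matrix.transpose_mul, ← Matrix.mul_assoc, Matrix.mul_assoc X (1 - P) ((1 - P)ᵀ), hQ,
      Matrix.mul_sub, Matrix.mul_one, Matrix.sub_mul]
  rw [h1, h2, Matrix.trace_sub]
  ring

lemma sum_ite_coe {n : ℕ} (c : ℕ) (f : Fin n → ℝ) :
    (∑ a : Fin n, if c = (a : ℕ) then f a else 0) = if h : c < n then f ⟨c, h⟩ else 0 := by
  split
  · next h =>
    rw [Finset.sum_eq_single ⟨c, h⟩]
    · simp
    · intro a _ ha
      rw [if_neg]
      intro hc
      exact ha (by ext; simp [← hc])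
    · simp
  · next h =>
    refine Finset.sum_eq_zero fun a _ => ?_
    rw [if_neg]
    intro hc
    exact h (hc ▸ a.isLt)

lemma key_scalar {m : ℕ} (k : ℕ) (c τ : Fin m → ℝ)
    (hc : ∀ i j : Fin m, (i : ℕ) ≤ (j : ℕ) → c j ≤ c i) (hc0 : ∀ i, 0 ≤ c i)
    (hτ0 : ∀ i, 0 ≤ τ i) (hτ1 : ∀ i, τ i ≤ 1) (hsum : ∑ i, τ i ≤ (k : ℝ)) :
    ∑ i, c i * τ i ≤ ∑ i : Fin m, (if (i : ℕ) < k then c i else 0) := by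
  by_cases hk : m ≤ k
  · calc ∑ i, c i * τ i ≤ ∑ i, c i := by
          refine Finset.sum_le_sum fun i _ => ?_
          nlinarith [hc0 i, hτ1 i, hτ0 i]
      _ = ∑ i : Fin m, (if (i : ℕ) < k then c i else 0) := by
          refine Finset.sum_congr rfl fun i _ => ?_
          rw [if_pos (lt_of_lt_of_le i.isLt hk)]
  · push_neg at hk
    set κ : Fin m := ⟨k, hk⟩
    have key : ∀ i : Fin m, c i * τ i - (if (i : ℕ) < k then c i else 0)
        ≤ c κ * τ i - (if (i : ℕ) < k then c κ else 0) := by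
      intro i
      by_cases h : (i : ℕ) < k
      · rw [if_pos h, if_pos h]
        have h1 : c κ ≤ c i := hc i κ (le_of_lt h)
        nlinarith [hτ1 i]
      · rw [if_neg h, if_neg h]
        have h1 : c i ≤ c κ := hc κ i (le_of_not_gt h)
        nlinarith [hτ0 i]
    have h2 : ∑ i, (c i * τ i - (if (i : ℕ) < k then c i else 0))
        ≤ ∑ i, (c κ * τ i - (if (i : ℕ) < k then c κ else 0)) :=
      Finset.sum_le_sum fun i _ => key i
    have h3 : ∑ i : Fin m, (if (i : ℕ) < k then c κ else 0) = k * c κ := by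
      rw [Fin.sum_univ_eq_sum_range (fun i => if i < k then c κ else 0) m]
      rw [← Finset.sum_subset (Finset.range_subset_range.mpr hk.le)
        (fun x _ hx => if_neg (by simpa using hx))]
      rw [Finset.sum_congr rfl (fun x hx => if_pos (Finset.mem_range.mp hx))]
      simp [Finset.sum_const, mul_comm]
    have h4 : ∑ i : Fin m, c κ * τ i = c κ * ∑ i, τ i := by rw [Finset.mul_sum]
    rw [Finset.sum_sub_distrib, Finset.sum_sub_distrib, h3, h4] at h2
    have h5 : c κ * (∑ i, τ i) - k * c κ ≤ 0 := by nlinarith [hc0 κ]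
    linarith


lemma sum_apply_E {n r : ℕ} (c : Fin r → ℝ) (v : Fin r → EuclideanSpace ℝ (Fin n)) (j : Fin n) :
    (∑ l, c l • v l) j = ∑ l, c l * v l j := by
  have : ∀ (s : Finset (Fin r)), (∑ l ∈ s, c l • v l) j = ∑ l ∈ s, c l * v l j := by
    intro s
    induction s using Finset.induction with
    | empty => rfl
    | insert _ _ h ih => rw [Finset.sum_insert h, Finset.sum_insert h, ← ih]; rfl
  exact this _

lemma exists_proj {m n k : ℕ} (B : Matrix (Fin m) (Fin n) ℝ) (hB : B.rank ≤ k) :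
    ∃ P : Matrix (Fin n) (Fin n) ℝ, Pᵀ = P ∧ P * P = P ∧ B * P = B ∧ P.trace ≤ (k : ℝ) := by
  classical
  let rowE : Fin m → EuclideanSpace ℝ (Fin n) := fun i => (WithLp.equiv 2 (Fin n → ℝ)).symm (B i)
  let W : Submodule ℝ (EuclideanSpace ℝ (Fin n)) := Submodule.span ℝ (Set.range rowE)
  have hfr : Module.finrank ℝ W ≤ k := by
    have h1 : Bᵀ.rank = Module.finrank ℝ W := by
      rw [Matrix.rank_eq_finrank_span_cols]
      have hmap : W.map (WithLp.linearEquiv 2 ℝ (Fin n → ℝ)).toLinearMap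
          = Submodule.span ℝ (Set.range Bᵀ.col) := by
        rw [Submodule.map_span, ← Set.range_comp]; rfl
      rw [← hmap, LinearEquiv.finrank_map_eq]
    have := Matrix.rank_transpose B
    omega
  let r := Module.finrank ℝ W
  let b := stdOrthonormalBasis ℝ W
  let v : Fin r → EuclideanSpace ℝ (Fin n) := fun l => ((b l : W) : EuclideanSpace ℝ (Fin n))
  have hO : ∀ l l', ∑ a, v l a * v l' a = if l = l' then (1:ℝ) else 0 := by
    intro l l'
    have h := b.orthonormal
    rw [orthonormal_iff_ite] at h
    have h2 := h l l'
    rw [Submodule.coe_inner] at h2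
    rw [show (inner ℝ ((b l : W) : EuclideanSpace ℝ (Fin n)) ((b l' : W) : EuclideanSpace ℝ (Fin n)) : ℝ) = ∑ a, v l a * v l' a by
      simp [PiLp.inner_apply, RCLike.inner_apply, v]
      exact Finset.sum_congr rfl fun _ _ => mul_comm _ _] at h2
    exact h2
  have hR : ∀ x, x ∈ W → ∀ j, (∑ l, (∑ a, v l a * x a) * v l j) = x j := by
    intro x hx j
    have h := b.sum_repr ⟨x, hx⟩
    have h2 : ((∑ l, b.repr ⟨x, hx⟩ l • b l : W) : EuclideanSpace ℝ (Fin n)) = x := by rw [h]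
    rw [Submodule.coe_sum] at h2
    have h3 : ∀ l, b.repr ⟨x, hx⟩ l = ∑ a, v l a * x a := by
      intro l
      rw [OrthonormalBasis.repr_apply_apply, Submodule.coe_inner]
      simp [PiLp.inner_apply, RCLike.inner_apply, v]
      exact Finset.sum_congr rfl fun _ _ => mul_comm _ _
    have h4 := congrFun (congrArg (fun (y : EuclideanSpace ℝ (Fin n)) => (y : Fin n → ℝ)) h2) j
    simp only [Submodule.coe_smul] at h4
    have h5 : (∑ l, b.repr ⟨x, hx⟩ l • ((b l : W) : EuclideanSpace ℝ (Fin n))) j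
        = ∑ l, b.repr ⟨x, hx⟩ l * v l j := sum_apply_E _ _ _
    rw [h5] at h4
    rw [← h4]
    exact Finset.sum_congr rfl fun l _ => by rw [h3 l]
  refine ⟨Matrix.of fun a c => ∑ l, v l a * v l c, ?_, ?_, ?_, ?_⟩
  · ext a c; simp only [Matrix.transpose_apply, Matrix.of_apply]
    exact Finset.sum_congr rfl fun l _ => mul_comm _ _
  · ext a c
    simp only [Matrix.mul_apply, Matrix.of_apply]
    calc ∑ x, (∑ l, v l a * v l x) * (∑ l', v l' x * v l' c)
        = ∑ x, ∑ l, ∑ l', (v l a * v l x) * (v l' x * v l' c) := by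
          simp only [Finset.sum_mul, Finset.mul_sum]
          exact Finset.sum_congr rfl fun x _ => Finset.sum_comm
      _ = ∑ l, ∑ x, ∑ l', (v l a * v l x) * (v l' x * v l' c) := Finset.sum_comm
      _ = ∑ l, ∑ l', ∑ x, (v l a * v l x) * (v l' x * v l' c) :=
          Finset.sum_congr rfl fun l _ => Finset.sum_comm
      _ = ∑ l, ∑ l', (v l a * v l' c) * ∑ x, v l x * v l' x :=
          Finset.sum_congr rfl fun l _ => Finset.sum_congr rfl fun l' _ => by
            rw [Finset.mul_sum]; exact Finset.sum_congr rfl fun x _ => by ring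
      _ = ∑ l, v l a * v l c := by
          simp [hO, mul_ite, Finset.sum_ite_eq']
  · ext i j
    simp only [Matrix.mul_apply, Matrix.of_apply, Finset.mul_sum]
    rw [Finset.sum_comm]
    have hx : rowE i ∈ W := Submodule.subset_span (Set.mem_range_self i)
    have := hR (rowE i) hx j
    rw [show (rowE i : Fin n → ℝ) j = B i j from rfl] at this
    rw [← this]
    refine Finset.sum_congr rfl fun l _ => ?_
    rw [Finset.sum_mul]
    exact Finset.sum_congr rfl fun a _ => by
      rw [show (rowE i : Fin n → ℝ) a = B i a from rfl]; ring
  · have : Matrix.trace (Matrix.of fun a c => ∑ l, v l a * v l c) = (r : ℝ) := by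
      simp only [Matrix.trace, Matrix.diag_apply, Matrix.of_apply]
      rw [Finset.sum_comm]
      have : ∀ l : Fin r, ∑ a, v l a * v l a = 1 := fun l => by rw [hO l l]; simp
      simp [this]
    rw [this]
    exact_mod_cast Nat.cast_le.mpr hfr


theorem stmt5 {m n : ℕ} (k : ℕ) (A M : Matrix (Fin m) (Fin n) ℝ)
    (U : Matrix (Fin m) (Fin m) ℝ) (V : Matrix (Fin n) (Fin n) ℝ)
    (σ : ℕ → ℝ) (S Sk : Matrix (Fin m) (Fin n) ℝ)
    (hU : Uᵀ * U = 1) (hU' : U * Uᵀ = 1)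
    (hV : Vᵀ * V = 1) (hV' : V * Vᵀ = 1)
    (hσnn : ∀ i, 0 ≤ σ i) (hσdesc : ∀ i j, i ≤ j → σ j ≤ σ i)
    (hS : ∀ i j, S i j = if (i : ℕ) = (j : ℕ) then σ (i : ℕ) else 0)
    (hSk : ∀ i j, Sk i j =
      if (i : ℕ) = (j : ℕ) ∧ (i : ℕ) < k then σ (i : ℕ) else 0)
    (hA : A = U * S * Vᵀ) (hM : M.rank ≤ k) :
    Real.sqrt (frobSq (A - U * Sk * Vᵀ)) ≤ Real.sqrt (frobSq (A - M)) := by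
  classical
  set B : Matrix (Fin m) (Fin n) ℝ := Uᵀ * M * V with hBdef
  have hBrank : B.rank ≤ k :=
    le_trans (le_trans (Matrix.rank_mul_le_left (Uᵀ * M) V)
      (Matrix.rank_mul_le_right Uᵀ M)) hM
  obtain ⟨P, hPt, hPP, hBP, htr⟩ := exists_proj B hBrank
  -- unitary reductions
  have e1 : A - U * Sk * Vᵀ = U * (S - Sk) * Vᵀ := by
    rw [hA, Matrix.mul_sub, Matrix.sub_mul]
  have e2 : A - M = U * (S - B) * Vᵀ := by
    rw [hA, Matrix.mul_sub, Matrix.sub_mul]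
    congr 1
    rw [hBdef]
    calc M = (U * Uᵀ) * M * (V * Vᵀ) := by rw [hU', hV', Matrix.one_mul, Matrix.mul_one]
      _ = U * (Uᵀ * M * V) * Vᵀ := by
          simp only [Matrix.mul_assoc]
  have f1 : frobSq (A - U * Sk * Vᵀ) = frobSq (S - Sk) := by
    rw [e1, frobSq_conj U V hU hV]
  have f2 : frobSq (A - M) = frobSq (S - B) := by
    rw [e2, frobSq_conj U V hU hV]
  -- diagonal of P
  have hsym : ∀ a b : Fin n, P a b = P b a := by
    intro a b
    nth_rewrite 1 [← hPt]
    rw [Matrix.transpose_apply]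
  have hdiag : ∀ ι : Fin n, P ι ι = ∑ j, (P ι j) ^ 2 := by
    intro ι
    conv_lhs => rw [← hPP]
    rw [Matrix.mul_apply]
    refine Finset.sum_congr rfl fun j _ => ?_
    rw [hsym j ι, sq]
  have hdiag0 : ∀ ι : Fin n, 0 ≤ P ι ι := fun ι => by
    rw [hdiag ι]; exact Finset.sum_nonneg fun _ _ => sq_nonneg _
  have hdiag1 : ∀ ι : Fin n, P ι ι ≤ 1 := by
    intro ι
    have h1 : (P ι ι) ^ 2 ≤ P ι ι := by
      conv_rhs => rw [hdiag ι]
      exact Finset.single_le_sum (fun j _ => sq_nonneg (P ι j)) (Finset.mem_univ ι)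
    nlinarith [hdiag0 ι]
  -- τ and c
  set τ : Fin m → ℝ := fun i => if h : (i : ℕ) < n then P ⟨i, h⟩ ⟨i, h⟩ else 0 with hτdef
  set c : Fin m → ℝ := fun i => if (i : ℕ) < n then σ (i : ℕ) ^ 2 else 0 with hcdef
  have hτ0 : ∀ i, 0 ≤ τ i := by
    intro i; rw [hτdef]; dsimp only; split
    · exact hdiag0 _
    · exact le_refl 0
  have hτ1 : ∀ i, τ i ≤ 1 := by
    intro i; rw [hτdef]; dsimp only; split
    · exact hdiag1 _
    · norm_num
  have hc0 : ∀ i, 0 ≤ c i := by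
    intro i; rw [hcdef]; dsimp only; split
    · exact sq_nonneg _
    · exact le_refl 0
  have hcmono : ∀ i j : Fin m, (i : ℕ) ≤ (j : ℕ) → c j ≤ c i := by
    intro i j hij
    rw [hcdef]; dsimp only
    split
    · next hjn =>
      rw [if_pos (lt_of_le_of_lt hij hjn)]
      have := hσdesc i j hij
      nlinarith [hσnn (j : ℕ), hσnn (i : ℕ)]
    · exact hc0 i
  -- sum of τ bounded by k
  have hτsum : ∑ i, τ i ≤ (k : ℝ) := by
    set g : ℕ → ℝ := fun a => if h : a < n then P ⟨a, h⟩ ⟨a, h⟩ else 0 with hgdef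
    have hg0 : ∀ a, 0 ≤ g a := by
      intro a; rw [hgdef]; dsimp only; split
      · exact hdiag0 _
      · exact le_refl 0
    have h1 : ∑ i, τ i = ∑ a ∈ Finset.range m, g a := by
      rw [← Fin.sum_univ_eq_sum_range]
    have h2 : P.trace = ∑ a ∈ Finset.range n, g a := by
      rw [Matrix.trace, ← Fin.sum_univ_eq_sum_range]
      refine Finset.sum_congr rfl fun a _ => ?_
      rw [hgdef]; dsimp only; rw [dif_pos a.isLt]
      rfl
    have h3 : ∑ a ∈ Finset.range m, g a ≤ ∑ a ∈ Finset.range (m + n), g a :=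
      Finset.sum_le_sum_of_subset_of_nonneg
        (Finset.range_subset_range.mpr (Nat.le_add_right m n)) (fun a _ _ => hg0 a)
    have h4 : ∑ a ∈ Finset.range n, g a = ∑ a ∈ Finset.range (m + n), g a := by
      refine Finset.sum_subset (Finset.range_subset_range.mpr (Nat.le_add_left n m)) ?_
      intro a _ ha
      rw [hgdef]; dsimp only
      rw [dif_neg (by simpa using ha)]
    rw [h1]
    calc ∑ a ∈ Finset.range m, g a ≤ ∑ a ∈ Finset.range (m + n), g a := h3
      _ = P.trace := by rw [h2, h4]
      _ ≤ (k : ℝ) := htr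
  -- frobSq (S * P) = ∑ c i * τ i
  have hSP : frobSq (S * P) = ∑ i, c i * τ i := by
    rw [frobSq]
    refine Finset.sum_congr rfl fun i _ => ?_
    have hrow : ∀ j, (S * P) i j = if h : (i : ℕ) < n then σ (i : ℕ) * P ⟨i, h⟩ j else 0 := by
      intro j
      rw [Matrix.mul_apply, ← sum_ite_coe (i : ℕ) (fun a => σ (i : ℕ) * P a j)]
      refine Finset.sum_congr rfl fun a _ => ?_
      rw [hS i a, ite_mul, zero_mul]
    by_cases hin : (i : ℕ) < n
    · have : ∀ j, (S * P) i j = σ (i : ℕ) * P ⟨i, hin⟩ j := fun j => by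
        rw [hrow j, dif_pos hin]
      simp only [this, mul_pow]
      rw [← Finset.mul_sum, ← hdiag ⟨i, hin⟩]
      rw [hcdef, hτdef]; dsimp only
      rw [if_pos hin, dif_pos hin]
    · have : ∀ j, (S * P) i j = 0 := fun j => by rw [hrow j, dif_neg hin]
      simp only [this]
      rw [hcdef, hτdef]; dsimp only
      rw [if_neg hin, dif_neg hin]
      simp
  -- frobSq Sk = ∑ (if i < k then c i else 0)
  have hSkfr : frobSq Sk = ∑ i : Fin m, (if (i : ℕ) < k then c i else 0) := by
    rw [frobSq]
    refine Finset.sum_congr rfl fun i _ => ?_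
    have hentry : ∀ j : Fin n, (Sk i j) ^ 2
        = if (i : ℕ) = (j : ℕ) then (if (i : ℕ) < k then σ (i : ℕ) ^ 2 else 0) else 0 := by
      intro j
      rw [hSk i j]
      by_cases h1 : (i : ℕ) = (j : ℕ) <;> by_cases h2 : (i : ℕ) < k <;>
        simp [h1, h2]
    simp only [hentry]
    rw [sum_ite_coe (i : ℕ) (fun _ => if (i : ℕ) < k then σ (i : ℕ) ^ 2 else 0)]
    rw [hcdef]; dsimp only
    by_cases hin : (i : ℕ) < n <;> by_cases hik : (i : ℕ) < k <;>
      simp [hin, hik]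
  -- frobSq S = frobSq (S - Sk) + frobSq Sk
  have hsplit : frobSq S = frobSq (S - Sk) + frobSq Sk := by
    rw [frobSq, frobSq, frobSq, ← Finset.sum_add_distrib]
    refine Finset.sum_congr rfl fun i _ => ?_
    rw [← Finset.sum_add_distrib]
    refine Finset.sum_congr rfl fun j _ => ?_
    rw [Matrix.sub_apply, hS i j, hSk i j]
    by_cases h1 : (i : ℕ) = (j : ℕ)
    · by_cases h2 : (i : ℕ) < k
      · rw [if_pos h1, if_pos ⟨h1, h2⟩]; ring
      · rw [if_pos h1, if_neg (fun h => h2 h.2)]; ring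
    · rw [if_neg h1, if_neg (fun h => h1 h.1)]; ring
  -- main chain
  have hkey : frobSq (S - Sk) ≤ frobSq (S - B) := by
    have d1 : frobSq (S - B) = frobSq ((S - B) * P) + frobSq ((S - B) * (1 - P)) :=
      frobSq_proj_split (S - B) P hPt hPP
    have d2 : (S - B) * (1 - P) = S * (1 - P) := by
      rw [Matrix.sub_mul]
      have : B * (1 - P) = 0 := by rw [Matrix.mul_sub, Matrix.mul_one, hBP, sub_self]
      rw [this, sub_zero]
    have d3 : frobSq S = frobSq (S * P) + frobSq (S * (1 - P)) :=
      frobSq_proj_split S P hPt hPP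
    have d4 : frobSq (S * P) ≤ frobSq Sk := by
      rw [hSP, hSkfr]
      exact key_scalar k c τ hcmono hc0 hτ0 hτ1 hτsum
    have d5 := frobSq_nonneg ((S - B) * P)
    rw [d1, d2]
    linarith
  rw [f1, f2]
  exact Real.sqrt_le_sqrt hkey
end

section
/- (Eckart–Young, spectral norm) For any m×n real matrix A and any m×n matrix M of rank at most k, ‖A − M‖₂ ≥ σ_{k+1}(A) = ‖A − A_k‖₂, where A_k is the rank-k truncated SVD of A. -/
open Matrix

noncomputable def specNorm {m n : ℕ} (A : Matrix (Fin m) (Fin n) ℝ) : ℝ :=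
  sSup {r | ∃ x : Fin n → ℝ, (∑ j, x j ^ 2) = 1 ∧
    r = Real.sqrt (∑ i, (A.mulVec x i) ^ 2)}

lemma orth_sumsq {m : ℕ} (U : Matrix (Fin m) (Fin m) ℝ) (hU : Uᵀ * U = 1)
    (v : Fin m → ℝ) : ∑ i, (U.mulVec v i)^2 = ∑ i, v i ^2 := by
  have h1 : ∀ w : Fin m → ℝ, ∑ i, w i ^ 2 = w ⬝ᵥ w := by
    intro w; simp [dotProduct, sq]
  rw [h1, h1, dotProduct_mulVec, ← mulVec_transpose, mulVec_mulVec, hU, one_mulVec]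

lemma diag_sumsq {m n : ℕ} (D : Matrix (Fin m) (Fin n) ℝ) (c : ℕ → ℝ)
    (hD : ∀ i j, D i j = if (i:ℕ) = (j:ℕ) then c (i:ℕ) else 0) (y : Fin n → ℝ) :
    ∑ i, (D.mulVec y i)^2 = ∑ j : Fin n, (if (j:ℕ) < m then c (j:ℕ)^2 else 0) * y j ^2 := by
  set Y : ℕ → ℝ := fun t => if h : t < n then y ⟨t, h⟩ else 0 with hY
  have hDv : ∀ i : Fin m, D.mulVec y i = c (i:ℕ) * Y (i:ℕ) := by
    intro i
    by_cases h : (i:ℕ) < n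
    · have h0 : D.mulVec y i = ∑ j, D i j * y j := rfl
      rw [h0, Finset.sum_eq_single (⟨(i:ℕ), h⟩ : Fin n)]
      · simp [hD, hY, h]
      · intro j _ hj
        rw [hD]
        have : ¬ ((i:ℕ) = (j:ℕ)) := by
          intro he; apply hj; exact Fin.ext he.symm
        simp [this]
      · simp
    · have h0 : D.mulVec y i = ∑ j, D i j * y j := rfl
      rw [h0, Finset.sum_eq_zero, hY]
      · simp [h]
      · intro j _
        rw [hD]
        have : ¬ ((i:ℕ) = (j:ℕ)) := by omega
        simp [this]
  simp only [hDv]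
  have hYj : ∀ j : Fin n, y j = Y (j:ℕ) := by intro j; simp [hY]
  simp only [hYj]
  rw [Fin.sum_univ_eq_sum_range (fun t => (c t * Y t)^2),
      Fin.sum_univ_eq_sum_range (fun t => (if t < m then c t^2 else 0) * Y t ^2)]
  have key : ∀ N, m ≤ N → n ≤ N →
      (∑ t ∈ Finset.range m, (c t * Y t)^2
        = ∑ t ∈ Finset.range N, (if t < m then (c t * Y t)^2 else 0)) ∧
      (∑ t ∈ Finset.range n, (if t < m then c t^2 else 0) * Y t ^2
        = ∑ t ∈ Finset.range N, (if t < m then (c t * Y t)^2 else 0)) := by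
    intro N hm hn
    constructor
    · calc ∑ t ∈ Finset.range m, (c t * Y t)^2
          = ∑ t ∈ Finset.range m, (if t < m then (c t * Y t)^2 else 0) := by
            apply Finset.sum_congr rfl; intro t ht; simp at ht; simp [ht]
        _ = ∑ t ∈ Finset.range N, (if t < m then (c t * Y t)^2 else 0) := by
            apply Finset.sum_subset (Finset.range_subset_range.2 hm)
            intro t _ ht; simp at ht; simp [ht]
    · calc ∑ t ∈ Finset.range n, (if t < m then c t^2 else 0) * Y t ^2
          = ∑ t ∈ Finset.range n, (if t < m then (c t * Y t)^2 else 0) := by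
            apply Finset.sum_congr rfl; intro t _
            by_cases h : t < m <;> simp [h, mul_pow]
        _ = ∑ t ∈ Finset.range N, (if t < m then (c t * Y t)^2 else 0) := by
            apply Finset.sum_subset (Finset.range_subset_range.2 hn)
            intro t _ ht
            simp at ht
            have : Y t = 0 := by simp [hY]; omega
            simp [this]
  obtain ⟨h1, h2⟩ := key (max m n) (le_max_left _ _) (le_max_right _ _)
  rw [h1, h2]

lemma specSet_bdd {m n : ℕ} (B : Matrix (Fin m) (Fin n) ℝ) :
    BddAbove {r | ∃ x : Fin n → ℝ, (∑ j, x j ^ 2) = 1 ∧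
      r = Real.sqrt (∑ i, (B.mulVec x i) ^ 2)} := by
  refine ⟨Real.sqrt (∑ i, ∑ j, B i j ^2), ?_⟩
  rintro r ⟨x, hx, rfl⟩
  apply Real.sqrt_le_sqrt
  apply Finset.sum_le_sum
  intro i _
  calc (B.mulVec x i)^2 = (∑ j, B i j * x j)^2 := rfl
    _ ≤ (∑ j, B i j ^2) * (∑ j, x j^2) := Finset.sum_mul_sq_le_sq_mul_sq _ _ _
    _ = ∑ j, B i j^2 := by rw [hx, mul_one]

lemma udv_sumsq {m n : ℕ} (U : Matrix (Fin m) (Fin m) ℝ) (V : Matrix (Fin n) (Fin n) ℝ)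
    (D : Matrix (Fin m) (Fin n) ℝ) (hU : Uᵀ * U = 1) (x : Fin n → ℝ) :
    ∑ i, ((U * D * Vᵀ).mulVec x i)^2 = ∑ i, (D.mulVec (Vᵀ.mulVec x) i)^2 := by
  have h : (U * D * Vᵀ).mulVec x = U.mulVec (D.mulVec (Vᵀ.mulVec x)) := by
    rw [mulVec_mulVec, mulVec_mulVec, Matrix.mul_assoc]
  rw [h, orth_sumsq U hU]

theorem stmt6 {m n : ℕ} (k : ℕ) (A M : Matrix (Fin m) (Fin n) ℝ)
    (U : Matrix (Fin m) (Fin m) ℝ) (V : Matrix (Fin n) (Fin n) ℝ)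
    (σ : ℕ → ℝ) (S Sk : Matrix (Fin m) (Fin n) ℝ)
    (hU : Uᵀ * U = 1) (hU' : U * Uᵀ = 1)
    (hV : Vᵀ * V = 1) (hV' : V * Vᵀ = 1)
    (hσnn : ∀ i, 0 ≤ σ i) (hσdesc : ∀ i j, i ≤ j → σ j ≤ σ i)
    (hS : ∀ i j, S i j = if (i : ℕ) = (j : ℕ) then σ (i : ℕ) else 0)
    (hSk : ∀ i j, Sk i j =
      if (i : ℕ) = (j : ℕ) ∧ (i : ℕ) < k then σ (i : ℕ) else 0)
    (hA : A = U * S * Vᵀ) (hk : k < min m n) (hM : M.rank ≤ k) :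
    σ k ≤ specNorm (A - M) ∧ specNorm (A - U * Sk * Vᵀ) = σ k := by
  classical
  have hkm : k < m := lt_of_lt_of_le hk (min_le_left _ _)
  have hkn : k < n := lt_of_lt_of_le hk (min_le_right _ _)
  have hVVt : (Vᵀ)ᵀ * Vᵀ = 1 := by rw [transpose_transpose]; exact hV'
  -- σ k ≥ 0
  have hσk : 0 ≤ σ k := hσnn k
  constructor
  · -- Part 1: lower bound for any rank ≤ k matrix M
    -- the equivalence given by V
    have hcomp1 : V.mulVecLin ∘ₗ Vᵀ.mulVecLin = LinearMap.id := by
      rw [← mulVecLin_mul, hV', mulVecLin_one]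
    have hcomp2 : Vᵀ.mulVecLin ∘ₗ V.mulVecLin = LinearMap.id := by
      rw [← mulVecLin_mul, hV, mulVecLin_one]
    let e : (Fin n → ℝ) ≃ₗ[ℝ] (Fin n → ℝ) :=
      LinearEquiv.ofLinear V.mulVecLin Vᵀ.mulVecLin hcomp1 hcomp2
    let C' : Submodule ℝ (Fin n → ℝ) :=
      { carrier := {y | ∀ j : Fin n, k < (j:ℕ) → y j = 0}
        add_mem' := by
          intro a b ha hb j hj
          show a j + b j = 0
          rw [ha j hj, hb j hj, add_zero]
        zero_mem' := fun j hj => rfl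
        smul_mem' := by
          intro c a ha j hj
          show c * a j = 0
          rw [ha j hj, mul_zero] }
    -- finrank C' ≥ k+1
    have hC'rk : k + 1 ≤ Module.finrank ℝ C' := by
      let g : Fin (k+1) → Fin n := fun t => ⟨(t:ℕ), by omega⟩
      let f : Fin (k+1) → (Fin n → ℝ) := fun t => Pi.single (g t) 1
      have hginj : Function.Injective g := by
        intro a b h
        have := congrArg Fin.val h
        exact Fin.ext this
      have hfi : LinearIndependent ℝ f := by
        have hb := (Pi.basisFun ℝ (Fin n)).linearIndependent
        have := hb.comp g hginj
        have hfe : f = (Pi.basisFun ℝ (Fin n)) ∘ g := by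
          funext t; simp [f, Pi.basisFun_apply]
        rw [hfe]; exact this
      have hspan : Submodule.span ℝ (Set.range f) ≤ C' := by
        rw [Submodule.span_le]
        rintro _ ⟨t, rfl⟩ j hj
        have hne : j ≠ g t := by
          intro h
          have : (j:ℕ) = (t:ℕ) := congrArg Fin.val h
          omega
        exact Pi.single_eq_of_ne hne 1
      have := finrank_span_eq_card hfi
      calc k + 1 = Module.finrank ℝ (Submodule.span ℝ (Set.range f)) := by
            rw [this]; simp
        _ ≤ Module.finrank ℝ C' := Submodule.finrank_mono hspan
    let W1 := LinearMap.ker M.mulVecLin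
    let W2 := Submodule.map (e : (Fin n → ℝ) →ₗ[ℝ] (Fin n → ℝ)) C'
    have hW2 : Module.finrank ℝ W2 = Module.finrank ℝ C' :=
      LinearEquiv.finrank_map_eq e C'
    have hrn : Module.finrank ℝ (LinearMap.range M.mulVecLin)
        + Module.finrank ℝ W1 = n := by
      rw [LinearMap.finrank_range_add_finrank_ker]
      simp
    have hMr : Module.finrank ℝ (LinearMap.range M.mulVecLin) ≤ k := hM
    have hsum := Submodule.finrank_sup_add_finrank_inf_eq W1 W2
    have hsup : Module.finrank ℝ (W1 ⊔ W2 : Submodule ℝ (Fin n → ℝ)) ≤ n := by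
      have := Submodule.finrank_le (W1 ⊔ W2)
      simpa using this
    have hinf : 1 ≤ Module.finrank ℝ (W1 ⊓ W2 : Submodule ℝ (Fin n → ℝ)) := by
      omega
    have hne : (W1 ⊓ W2 : Submodule ℝ (Fin n → ℝ)) ≠ ⊥ := by
      intro h
      rw [h] at hinf
      simp [finrank_bot] at hinf
    obtain ⟨x, hx, hx0⟩ := (Submodule.ne_bot_iff _).1 hne
    have hxW1 : M.mulVec x = 0 := hx.1
    obtain ⟨y, hyC, hyx⟩ := hx.2
    have hyx' : V.mulVec y = x := hyx
    have hVtx : Vᵀ.mulVec x = y := by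
      rw [← hyx', mulVec_mulVec, hV, one_mulVec]
    -- normalize x
    set s : ℝ := ∑ j, x j ^ 2 with hs
    have hspos : 0 < s := by
      obtain ⟨j, hj⟩ : ∃ j, x j ≠ 0 := by
        by_contra h
        push_neg at h
        exact hx0 (funext h)
      apply Finset.sum_pos' (fun i _ => sq_nonneg _)
      exact ⟨j, Finset.mem_univ j, lt_of_le_of_ne (sq_nonneg _)
        (Ne.symm (pow_ne_zero 2 hj))⟩
    set a : ℝ := (Real.sqrt s)⁻¹ with ha
    have hsq : Real.sqrt s ≠ 0 := by positivity
    set x' : Fin n → ℝ := a • x with hx'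
    have hx'unit : ∑ j, x' j ^ 2 = 1 := by
      have : ∀ j, x' j ^ 2 = a ^ 2 * x j ^ 2 := by
        intro j; simp [hx', mul_pow]
      simp only [this]
      rw [← Finset.mul_sum, ← hs, ha, ← Real.sqrt_inv, Real.sq_sqrt (by positivity)]
      field_simp
    have hMx' : M.mulVec x' = 0 := by
      rw [hx', mulVec_smul, hxW1, smul_zero]
    set y' : Fin n → ℝ := Vᵀ.mulVec x' with hy'
    have hy'a : y' = a • y := by
      rw [hy', hx', mulVec_smul, hVtx]
    have hy'unit : ∑ j, y' j ^ 2 = 1 := by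
      rw [hy', orth_sumsq Vᵀ hVVt, hx'unit]
    have hy'supp : ∀ j : Fin n, k < (j:ℕ) → y' j = 0 := by
      intro j hj
      rw [hy'a]
      show a * y j = 0
      rw [hyC j hj, mul_zero]
    -- the value
    have hval : ∑ i, ((A - M).mulVec x' i) ^ 2
        = ∑ j : Fin n, (if (j:ℕ) < m then σ (j:ℕ)^2 else 0) * y' j ^2 := by
      have h1 : (A - M).mulVec x' = A.mulVec x' := by
        rw [sub_mulVec, hMx', sub_zero]
      rw [h1, hA, udv_sumsq U V S hU x', diag_sumsq S σ hS, ← hy']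
    have hge : σ k ^ 2 ≤ ∑ i, ((A - M).mulVec x' i) ^ 2 := by
      rw [hval]
      calc σ k ^ 2 = σ k ^ 2 * ∑ j, y' j ^ 2 := by rw [hy'unit, mul_one]
        _ = ∑ j, σ k ^ 2 * y' j ^ 2 := Finset.mul_sum _ _ _
        _ ≤ ∑ j : Fin n, (if (j:ℕ) < m then σ (j:ℕ)^2 else 0) * y' j ^2 := by
            apply Finset.sum_le_sum
            intro j _
            by_cases hj : k < (j:ℕ)
            · rw [hy'supp j hj]
              simp
            · push_neg at hj
              have hjm : (j:ℕ) < m := by omega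
              simp only [hjm, if_true]
              apply mul_le_mul_of_nonneg_right _ (sq_nonneg _)
              exact pow_le_pow_left₀ hσk (hσdesc (j:ℕ) k hj) 2
    have hmem : Real.sqrt (∑ i, ((A - M).mulVec x' i) ^ 2) ∈
        {r | ∃ x : Fin n → ℝ, (∑ j, x j ^ 2) = 1 ∧
          r = Real.sqrt (∑ i, ((A - M).mulVec x i) ^ 2)} :=
      ⟨x', hx'unit, rfl⟩
    calc σ k = Real.sqrt (σ k ^ 2) := (Real.sqrt_sq hσk).symm
      _ ≤ Real.sqrt (∑ i, ((A - M).mulVec x' i) ^ 2) := Real.sqrt_le_sqrt hge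
      _ ≤ specNorm (A - M) := le_csSup (specSet_bdd _) hmem
  · -- Part 2: the truncated SVD attains σ k
    set D : Matrix (Fin m) (Fin n) ℝ := S - Sk with hDdef
    set c : ℕ → ℝ := fun t => if t < k then 0 else σ t with hc
    have hD : ∀ i j, D i j = if (i:ℕ) = (j:ℕ) then c (i:ℕ) else 0 := by
      intro i j
      simp only [hDdef, Matrix.sub_apply, hS, hSk, hc]
      by_cases h1 : (i:ℕ) = (j:ℕ) <;> by_cases h2 : (j:ℕ) < k <;>
        simp [h1, h2]
    have hAU : A - U * Sk * Vᵀ = U * D * Vᵀ := by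
      rw [hA, hDdef, Matrix.mul_sub, Matrix.sub_mul]
    rw [hAU]
    -- every element of the set is ≤ σ k
    have hub : ∀ r ∈ {r | ∃ x : Fin n → ℝ, (∑ j, x j ^ 2) = 1 ∧
        r = Real.sqrt (∑ i, ((U * D * Vᵀ).mulVec x i) ^ 2)}, r ≤ σ k := by
      rintro r ⟨x, hx, rfl⟩
      have h1 : ∑ i, ((U * D * Vᵀ).mulVec x i) ^ 2
          = ∑ j : Fin n, (if (j:ℕ) < m then c (j:ℕ)^2 else 0) * (Vᵀ.mulVec x) j ^2 := by
        rw [udv_sumsq U V D hU x, diag_sumsq D c hD]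
      have hyu : ∑ j, (Vᵀ.mulVec x) j ^ 2 = 1 := by
        rw [orth_sumsq Vᵀ hVVt, hx]
      have h2 : ∑ i, ((U * D * Vᵀ).mulVec x i) ^ 2 ≤ σ k ^ 2 := by
        rw [h1]
        calc ∑ j : Fin n, (if (j:ℕ) < m then c (j:ℕ)^2 else 0) * (Vᵀ.mulVec x) j ^2
            ≤ ∑ j : Fin n, σ k ^ 2 * (Vᵀ.mulVec x) j ^2 := by
              apply Finset.sum_le_sum
              intro j _
              apply mul_le_mul_of_nonneg_right _ (sq_nonneg _)
              by_cases hjm : (j:ℕ) < m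
              · simp only [hjm, if_true, hc]
                by_cases hjk : (j:ℕ) < k
                · simp [hjk]; positivity
                · simp only [hjk, if_false]
                  push_neg at hjk
                  exact pow_le_pow_left₀ (hσnn _) (hσdesc k (j:ℕ) hjk) 2
              · simp only [hjm, if_false]
                positivity
          _ = σ k ^ 2 := by rw [← Finset.mul_sum, hyu, mul_one]
      calc Real.sqrt (∑ i, ((U * D * Vᵀ).mulVec x i) ^ 2)
          ≤ Real.sqrt (σ k ^ 2) := Real.sqrt_le_sqrt h2
        _ = σ k := Real.sqrt_sq hσk
    -- σ k is attained
    have hmem : σ k ∈ {r | ∃ x : Fin n → ℝ, (∑ j, x j ^ 2) = 1 ∧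
        r = Real.sqrt (∑ i, ((U * D * Vᵀ).mulVec x i) ^ 2)} := by
      set k' : Fin n := ⟨k, hkn⟩ with hk'
      set v : Fin n → ℝ := Pi.single k' 1 with hv
      have hvsq : ∀ j, v j ^ 2 = if j = k' then 1 else 0 := by
        intro j
        by_cases h : j = k' <;> simp [hv, h, Pi.single_apply]
      have hvunit : ∑ j, v j ^ 2 = 1 := by
        simp only [hvsq]
        simp
      refine ⟨V.mulVec v, ?_, ?_⟩
      · rw [orth_sumsq V hV, hvunit]
      · have hVtv : Vᵀ.mulVec (V.mulVec v) = v := by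
          rw [mulVec_mulVec, hV, one_mulVec]
        rw [udv_sumsq U V D hU, hVtv, diag_sumsq D c hD]
        have : ∀ j : Fin n, (if (j:ℕ) < m then c (j:ℕ)^2 else 0) * v j ^2
            = if j = k' then σ k ^ 2 else 0 := by
          intro j
          rw [hvsq]
          by_cases h : j = k'
          · subst h
            simp [hk', hkm, hc, Nat.lt_irrefl]
          · simp [h]
        simp only [this]
        rw [Finset.sum_ite_eq' Finset.univ k' (fun _ => σ k ^ 2)]
        simp [Real.sqrt_sq hσk]
    exact le_antisymm (csSup_le ⟨σ k, hmem⟩ hub) (le_csSup (specSet_bdd _) hmem)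
end
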